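/- (Stable screening, ball-zone version.) Let A ∈ ℝ^{N×K} with columns a_1, …, a_K, y ∈ ℝ^N, λ > 0, and let x* ∈ ℝ^K minimize the Lasso primal objective P(x|A) over ℝ^K; set θ* = (y − Ax*)/λ. Let p, q ∈ [1, ∞] with conjugate exponents p*, q*, let c ∈ ℝ^N, R ≥ 0 with θ* ∈ B_p(c, R). Let ã_j ∈ ℝ^N and ε ≥ ‖ã_j − a_j‖_q for some index j. If |ã_jᵀc| + ε‖c‖_{q*} + R‖ã_j‖_{p*} + C_{p,q} R ε < 1, where C_{p,q} = N^{(1 − 1/p − 1/q)₊}, then x*(j) = 0. -/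

import Mathlib

open scoped ENNReal
open Matrix Finset

/-- The ℓp-norm on ℝ^N for `p ∈ [1, ∞]` (given as `p : ℝ≥0∞`). -/
noncomputable def lpNorm {N : ℕ} (p : ℝ≥0∞) (v : Fin N → ℝ) : ℝ :=
  if p = ∞ then ⨆ i, |v i| else (∑ i, |v i| ^ p.toReal) ^ (1 / p.toReal)

/-- The Lasso primal objective `P(x|A) = ½‖Ax − y‖₂² + λ‖x‖₁`. -/
noncomputable def lassoPrimal {N K : ℕ} (A : Matrix (Fin N) (Fin K) ℝ)
    (y : Fin N → ℝ) (lam : ℝ) (x : Fin K → ℝ) : ℝ :=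
  (1 / 2) * (lpNorm 2 (A *ᵥ x - y)) ^ 2 + lam * lpNorm 1 x

/-- The Lasso dual objective `D(θ) = ½‖y‖₂² − (λ²/2)‖θ − y/λ‖₂²`. -/
noncomputable def lassoDual {N : ℕ} (y : Fin N → ℝ) (lam : ℝ)
    (θ : Fin N → ℝ) : ℝ :=
  (1 / 2) * (lpNorm 2 y) ^ 2 - (lam ^ 2 / 2) * (lpNorm 2 (θ - lam⁻¹ • y)) ^ 2

section Aux

variable {N : ℕ}

lemma lpNorm_congr_abs (p : ℝ≥0∞) {u v : Fin N → ℝ} (h : ∀ i, |u i| = |v i|) :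
    lpNorm p u = lpNorm p v := by
  simp only [lpNorm, h]

lemma lpNorm_nonneg (p : ℝ≥0∞) (v : Fin N → ℝ) : 0 ≤ lpNorm p v := by
  unfold lpNorm
  split
  · rcases isEmpty_or_nonempty (Fin N) with h | h
    · simp [Real.iSup_of_isEmpty]
    · exact le_ciSup_of_le (Set.Finite.bddAbove (Set.finite_range _)) (Classical.arbitrary _)
        (abs_nonneg _)
  · exact Real.rpow_nonneg (Finset.sum_nonneg fun i _ => Real.rpow_nonneg (abs_nonneg _) _) _

lemma sq_lpNorm2 (w : Fin N → ℝ) : lpNorm 2 w ^ 2 = ∑ i, w i ^ 2 := by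
  have h2 : ((2 : ℝ≥0∞)).toReal = 2 := by norm_num
  rw [lpNorm, if_neg (by norm_num), h2]
  have hnn : (0:ℝ) ≤ ∑ i, |w i| ^ (2:ℝ) :=
    Finset.sum_nonneg fun i _ => Real.rpow_nonneg (abs_nonneg _) _
  have hsummand : ∀ i : Fin N, |w i| ^ (2:ℝ) = w i ^ 2 := fun i => by
    rw [show (2:ℝ) = ((2:ℕ):ℝ) by norm_num, Real.rpow_natCast, sq_abs]
  rw [← Real.rpow_natCast ((∑ i, |w i| ^ (2:ℝ)) ^ (1/2:ℝ)) 2, ← Real.rpow_mul hnn]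
  norm_num [hsummand]

lemma lpNorm_one (x : Fin N → ℝ) : lpNorm 1 x = ∑ i, |x i| := by
  rw [lpNorm, if_neg (by norm_num)]
  simp [Real.rpow_one]

lemma conj_symm {r s : ℝ≥0∞} (h : 1 / r + 1 / s = 1) : 1 / s + 1 / r = 1 := by
  rw [add_comm] at h; exact h

lemma conj_one_le {r s : ℝ≥0∞} (h : 1 / r + 1 / s = 1) : 1 ≤ s := by
  have h1 : 1 / s ≤ 1 := by
    calc 1 / s ≤ 1 / r + 1 / s := le_add_self
    _ = 1 := h
  rw [one_div, ENNReal.inv_le_one] at h1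
  exact h1

lemma conj_trichotomy {r s : ℝ≥0∞} (hr : 1 ≤ r) (h : 1 / r + 1 / s = 1) :
    (r = 1 ∧ s = ∞) ∨ (r = ∞ ∧ s = 1) ∨
      (r ≠ ∞ ∧ s ≠ ∞ ∧ Real.HolderConjugate r.toReal s.toReal) := by
  rcases eq_or_ne r 1 with hr1 | hr1
  · left
    refine ⟨hr1, ?_⟩
    subst hr1
    simp only [one_div, inv_one] at h
    have h0 : s⁻¹ = 0 := by
      have := ENNReal.add_right_inj (a := (1:ℝ≥0∞)) (b := s⁻¹) (c := 0) (by simp)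
      rw [← this]
      simpa using h
    rwa [ENNReal.inv_eq_zero] at h0
  rcases eq_or_ne r ∞ with hrtop | hrtop
  · right; left
    refine ⟨hrtop, ?_⟩
    subst hrtop
    simp only [one_div, ENNReal.inv_top, zero_add, ENNReal.inv_eq_one] at h
    exact h
  · right; right
    have hr0 : r ≠ 0 := by intro h0; rw [h0] at hr; simp at hr
    have hs1 : 1 ≤ s := conj_one_le h
    have hs0 : s ≠ 0 := by intro h0; rw [h0] at hs1; simp at hs1
    have hstop : s ≠ ∞ := by
      intro h0
      rw [h0] at h
      simp only [one_div, ENNReal.inv_top, add_zero, ENNReal.inv_eq_one] at h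
      exact hr1 h
    refine ⟨hrtop, hstop, ?_⟩
    have hfin1 : (1/r : ℝ≥0∞) ≠ ∞ := by rw [one_div]; simpa [ENNReal.inv_ne_top] using hr0
    have hfin2 : (1/s : ℝ≥0∞) ≠ ∞ := by rw [one_div]; simpa [ENNReal.inv_ne_top] using hs0
    have htr := congrArg ENNReal.toReal h
    rw [ENNReal.toReal_add hfin1 hfin2] at htr
    simp only [one_div, ENNReal.toReal_inv, ENNReal.toReal_one] at htr
    refine ⟨by rw [inv_one]; exact htr, ?_, ENNReal.toReal_pos hs0 hstop⟩
    exact lt_trans one_pos ((ENNReal.toReal_lt_toReal (by simp) hrtop).mpr (lt_of_le_of_ne hr (Ne.symm hr1)))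


/-- Hölder's inequality for the dot product. -/
lemma abs_dotProduct_le (hN : 0 < N) {r s : ℝ≥0∞} (hr : 1 ≤ r)
    (h : 1 / r + 1 / s = 1) (u v : Fin N → ℝ) :
    |u ⬝ᵥ v| ≤ lpNorm r u * lpNorm s v := by
  have hstep : |u ⬝ᵥ v| ≤ ∑ i, |u i| * |v i| := by
    rw [dotProduct]
    refine le_trans (Finset.abs_sum_le_sum_abs _ _) ?_
    exact le_of_eq (Finset.sum_congr rfl fun i _ => abs_mul _ _)
  have hbddu : BddAbove (Set.range fun i => |u i|) := Set.Finite.bddAbove (Set.finite_range _)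
  have hbddv : BddAbove (Set.range fun i => |v i|) := Set.Finite.bddAbove (Set.finite_range _)
  rcases conj_trichotomy hr h with ⟨hr1, hstop⟩ | ⟨hrtop, hs1⟩ | ⟨hrtop, hstop, hc⟩
  · subst hr1; subst hstop
    rw [lpNorm_one]
    rw [show lpNorm ∞ v = ⨆ i, |v i| from by rw [lpNorm, if_pos rfl]]
    refine le_trans hstep ?_
    rw [Finset.sum_mul]
    refine Finset.sum_le_sum fun i _ => ?_
    exact mul_le_mul_of_nonneg_left (le_ciSup hbddv i) (abs_nonneg _)
  · subst hrtop; subst hs1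
    rw [lpNorm_one]
    rw [show lpNorm ∞ u = ⨆ i, |u i| from by rw [lpNorm, if_pos rfl]]
    refine le_trans hstep ?_
    rw [mul_comm, Finset.sum_mul]
    refine Finset.sum_le_sum fun i _ => ?_
    rw [mul_comm (|u i|)]
    exact mul_le_mul_of_nonneg_left (le_ciSup hbddu i) (abs_nonneg _)
  · have := Real.inner_le_Lp_mul_Lq Finset.univ (fun i => |u i|) (fun i => |v i|) hc
    simp only [abs_abs] at this
    refine le_trans hstep (le_trans this ?_)
    rw [lpNorm, if_neg hrtop, lpNorm, if_neg hstop]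

lemma real_add_rpow_le_rpow_add {a b m : ℝ} (ha : 0 ≤ a) (hb : 0 ≤ b) (hm : 1 ≤ m) :
    a ^ m + b ^ m ≤ (a + b) ^ m := by
  lift a to NNReal using ha
  lift b to NNReal using hb
  have := NNReal.add_rpow_le_rpow_add a b hm
  have h2 := NNReal.coe_le_coe.mpr this
  push_cast at h2
  exact h2

lemma sum_rpow_le_rpow_sum {M : ℕ} {f : Fin M → ℝ} (hf : ∀ i, 0 ≤ f i) {m : ℝ} (hm : 1 ≤ m) :
    ∑ i, f i ^ m ≤ (∑ i, f i) ^ m := by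
  have hm0 : m ≠ 0 := by positivity
  classical
  have H : ∀ t : Finset (Fin M), ∑ i ∈ t, f i ^ m ≤ (∑ i ∈ t, f i) ^ m := by
    intro t
    induction t using Finset.induction_on with
    | empty => simp [Real.zero_rpow hm0]
    | @insert a t hnotmem ih =>
      rw [Finset.sum_insert hnotmem, Finset.sum_insert hnotmem]
      refine le_trans (add_le_add_right ih _) ?_
      exact real_add_rpow_le_rpow_add (hf a) (Finset.sum_nonneg fun i _ => hf i) hm
  exact H Finset.univ

/-- norm comparison with cardinality factor. -/
lemma lpNorm_le_factor_mul_lpNorm (hN : 0 < N) {r s : ℝ≥0∞} (hr : 1 ≤ r) (hs : 1 ≤ s)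
    (v : Fin N → ℝ) :
    lpNorm r v ≤ (N : ℝ) ^ max ((1/r).toReal - (1/s).toReal) 0 * lpNorm s v := by
  have hNne : Nonempty (Fin N) := ⟨⟨0, hN⟩⟩
  have hbdd : BddAbove (Set.range fun i => |v i|) := Set.Finite.bddAbove (Set.finite_range _)
  have hMnn : (0:ℝ) ≤ ⨆ i, |v i| :=
    le_ciSup_of_le hbdd (Classical.arbitrary _) (abs_nonneg _)
  have hNpos : (0:ℝ) < (N:ℝ) := by exact_mod_cast hN
  rcases eq_or_ne r ∞ with hrtop | hrtop
  · -- r = ∞ : lpNorm ∞ v ≤ factor * lpNorm s v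
    subst hrtop
    rcases eq_or_ne s ∞ with hstop | hstop
    · subst hstop; simp [lpNorm]
    · -- sup ≤ lpNorm s v, factor = 1
      have hst1 : 1 ≤ s.toReal := by
        rw [show (1:ℝ) = (1:ℝ≥0∞).toReal by simp]
        exact ENNReal.toReal_mono hstop hs
      have hstpos : 0 < s.toReal := by linarith
      have hfac : max ((1/(∞:ℝ≥0∞)).toReal - (1/s).toReal) 0 = 0 := by
        have hz : (1/(∞:ℝ≥0∞)).toReal = 0 := by simp
        rw [hz, zero_sub, max_eq_right (neg_nonpos.mpr ENNReal.toReal_nonneg)]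
      rw [hfac, Real.rpow_zero, one_mul, lpNorm, if_pos rfl, lpNorm, if_neg hstop]
      refine ciSup_le fun i => ?_
      have h1 : |v i| ^ s.toReal ≤ ∑ k, |v k| ^ s.toReal :=
        Finset.single_le_sum (fun k _ => Real.rpow_nonneg (abs_nonneg _) _) (Finset.mem_univ i)
      have h2 := Real.rpow_le_rpow (Real.rpow_nonneg (abs_nonneg _) _) h1
        (le_of_lt (by positivity : (0:ℝ) < 1 / s.toReal))
      rwa [← Real.rpow_mul (abs_nonneg _), mul_one_div, div_self (ne_of_gt hstpos),
        Real.rpow_one] at h2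
  · have hrt1 : 1 ≤ r.toReal := by
      rw [show (1:ℝ) = (1:ℝ≥0∞).toReal by simp]
      exact ENNReal.toReal_mono hrtop hr
    have hrtpos : 0 < r.toReal := by linarith
    rcases eq_or_ne s ∞ with hstop | hstop
    · -- s = ∞, r finite: factor = N ^ (1/rt)
      subst hstop
      have hfac : max ((1/r).toReal - (1/(∞:ℝ≥0∞)).toReal) 0 = 1 / r.toReal := by
        have hz : (1/(∞:ℝ≥0∞)).toReal = 0 := by simp
        rw [hz, sub_zero, max_eq_left ENNReal.toReal_nonneg, one_div, ENNReal.toReal_inv]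
        exact (one_div _).symm
      rw [hfac, lpNorm, if_neg hrtop, lpNorm, if_pos rfl]
      set M : ℝ := ⨆ i, |v i| with hMdef
      have hsum : ∑ i, |v i| ^ r.toReal ≤ (N:ℝ) * M ^ r.toReal := by
        have hb : ∀ i ∈ Finset.univ, |v i| ^ r.toReal ≤ M ^ r.toReal := fun i _ =>
          Real.rpow_le_rpow (abs_nonneg _) (le_ciSup hbdd i) (by linarith)
        calc ∑ i, |v i| ^ r.toReal ≤ Finset.univ.card • (M ^ r.toReal) :=
              Finset.sum_le_card_nsmul _ _ _ hb
        _ = (N:ℝ) * M ^ r.toReal := by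
              simp [Finset.card_univ, nsmul_eq_mul]
      have h2 := Real.rpow_le_rpow
        (Finset.sum_nonneg fun i _ => Real.rpow_nonneg (abs_nonneg _) _) hsum
        (le_of_lt (by positivity : (0:ℝ) < 1 / r.toReal))
      rwa [Real.mul_rpow (le_of_lt hNpos) (Real.rpow_nonneg hMnn _),
        ← Real.rpow_mul hMnn, mul_one_div, div_self (ne_of_gt hrtpos),
        Real.rpow_one] at h2
    · -- both finite
      have hst1 : 1 ≤ s.toReal := by
        rw [show (1:ℝ) = (1:ℝ≥0∞).toReal by simp]
        exact ENNReal.toReal_mono hstop hs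
      have hstpos : 0 < s.toReal := by linarith
      have hSnn : (0:ℝ) ≤ ∑ i, |v i| ^ s.toReal :=
        Finset.sum_nonneg fun i _ => Real.rpow_nonneg (abs_nonneg _) _
      rw [lpNorm, if_neg hrtop, lpNorm, if_neg hstop]
      rcases le_total s.toReal r.toReal with hle | hge
      · -- monotone case: factor = 1
        have hfac : max ((1/r).toReal - (1/s).toReal) 0 = 0 := by
          simp only [one_div, ENNReal.toReal_inv]
          rw [max_eq_right (sub_nonpos.mpr (inv_anti₀ hstpos hle))]
        rw [hfac, Real.rpow_zero, one_mul]
        set m : ℝ := r.toReal / s.toReal with hmdef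
        have hm1 : 1 ≤ m := (one_le_div hstpos).mpr hle
        have hkey : ∑ i, |v i| ^ r.toReal ≤ (∑ i, |v i| ^ s.toReal) ^ m := by
          have : ∀ i : Fin N, |v i| ^ r.toReal = (|v i| ^ s.toReal) ^ m := fun i => by
            rw [← Real.rpow_mul (abs_nonneg _), hmdef]
            congr 1
            field_simp
          simp only [this]
          exact sum_rpow_le_rpow_sum (fun i => Real.rpow_nonneg (abs_nonneg _) _) hm1
        have h2 := Real.rpow_le_rpow
          (Finset.sum_nonneg fun i _ => Real.rpow_nonneg (abs_nonneg _) _) hkey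
          (le_of_lt (by positivity : (0:ℝ) < 1 / r.toReal))
        rwa [← Real.rpow_mul hSnn, hmdef,
          show r.toReal / s.toReal * (1 / r.toReal) = 1 / s.toReal by field_simp] at h2
      · -- factor case: use weighted Hölder
        have hfac : max ((1/r).toReal - (1/s).toReal) 0 = (r.toReal)⁻¹ - (s.toReal)⁻¹ := by
          simp only [one_div, ENNReal.toReal_inv]
          rw [max_eq_left (sub_nonneg.mpr (inv_anti₀ hrtpos hge))]
        set P : ℝ := s.toReal / r.toReal with hPdef
        have hP1 : 1 ≤ P := (one_le_div hrtpos).mpr hge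
        have hH := Real.inner_le_weight_mul_Lp_of_nonneg Finset.univ hP1
          (fun _ => (1:ℝ)) (fun i => |v i| ^ r.toReal) (fun _ => zero_le_one)
          (fun i => Real.rpow_nonneg (abs_nonneg _) _)
        simp only [one_mul] at hH
        have hpow : ∀ i : Fin N, (|v i| ^ r.toReal) ^ P = |v i| ^ s.toReal := fun i => by
          rw [← Real.rpow_mul (abs_nonneg _), hPdef]
          congr 1
          field_simp
        simp only [hpow, Finset.sum_const, Finset.card_univ, Fintype.card_fin,
          nsmul_eq_mul, mul_one] at hH
        -- hH : ∑ |v i|^rt ≤ N ^ (1 - P⁻¹) * (∑ |v i|^st) ^ P⁻¹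
        have h2 := Real.rpow_le_rpow
          (Finset.sum_nonneg fun i _ => Real.rpow_nonneg (abs_nonneg _) _) hH
          (le_of_lt (by positivity : (0:ℝ) < 1 / r.toReal))
        rw [Real.mul_rpow (Real.rpow_nonneg (le_of_lt hNpos) _)
          (Real.rpow_nonneg hSnn _), ← Real.rpow_mul (le_of_lt hNpos),
          ← Real.rpow_mul hSnn] at h2
        rw [hfac]
        have hrne : r.toReal ≠ 0 := ne_of_gt hrtpos
        have hsne : s.toReal ≠ 0 := ne_of_gt hstpos
        have hPinv : P⁻¹ = r.toReal / s.toReal := by rw [hPdef, inv_div]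
        have e1 : (1 - P⁻¹) * (1 / r.toReal) = (r.toReal)⁻¹ - (s.toReal)⁻¹ := by
          rw [hPinv]; field_simp
        have e2 : P⁻¹ * (1 / r.toReal) = 1 / s.toReal := by
          rw [hPinv]; field_simp
        rwa [e1, e2] at h2

/-- KKT-type condition. -/
lemma kkt {N K : ℕ} (A : Matrix (Fin N) (Fin K) ℝ) (y : Fin N → ℝ) (lam : ℝ)
    (hlam : 0 < lam) (xstar : Fin K → ℝ)
    (hmin : ∀ x : Fin K → ℝ, lassoPrimal A y lam xstar ≤ lassoPrimal A y lam x)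
    (j : Fin K) (hj : xstar j ≠ 0) :
    lam ≤ |(fun i => A i j) ⬝ᵥ (y - A *ᵥ xstar)| := by
  classical
  set a : Fin N → ℝ := fun i => A i j with ha
  set u : Fin N → ℝ := A *ᵥ xstar - y with hu
  set D : ℝ := ∑ i, a i * u i with hD
  set Q : ℝ := ∑ i, a i ^ 2 with hQ
  have hQnn : 0 ≤ Q := Finset.sum_nonneg fun i _ => sq_nonneg _
  set sg : ℝ := if 0 < xstar j then 1 else -1 with hs
  have hs2 : sg * sg = 1 := by rw [hs]; split <;> norm_num
  have hsabs : |sg| = 1 := by rw [hs]; split <;> norm_num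
  have hsx : sg * xstar j = |xstar j| := by
    rw [hs]; rcases lt_trichotomy (xstar j) 0 with h | h | h
    · rw [if_neg (by linarith), abs_of_neg h]; ring
    · exact absurd h hj
    · rw [if_pos h, abs_of_pos h]; ring
  set m : ℝ := |xstar j| with hm
  have hm0 : 0 < m := abs_pos.mpr hj
  have hxj : xstar j = sg * m := by
    have h' : (sg * sg) * xstar j = sg * m := by rw [mul_assoc, hsx]
    rwa [hs2, one_mul] at h'
  have key : ∀ t : ℝ, 0 < t → t ≤ m → lam ≤ -sg * D + t * Q / 2 := by
    intro t ht htm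
    set xt : Fin K → ℝ := xstar - (t * sg) • (Pi.single j (1:ℝ) : Fin K → ℝ) with hxt
    have hAxt : A *ᵥ xt - y = u - (t * sg) • a := by
      rw [hxt, Matrix.mulVec_sub, Matrix.mulVec_smul, Matrix.mulVec_single]
      ext i
      simp only [Pi.sub_apply, Pi.smul_apply, smul_eq_mul, hu, ha, MulOpposite.op_one, one_smul, Matrix.col_apply]
      ring
    have hquad : ∑ i, (A *ᵥ xt - y) i ^ 2
        = ∑ i, u i ^ 2 - 2 * (t * sg) * D + t ^ 2 * Q := by
      rw [hAxt]
      have expand : ∀ i : Fin N, (u i - (t * sg) * a i) ^ 2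
          = u i ^ 2 - 2 * (t * sg) * (a i * u i) + (t ^ 2 * (sg * sg)) * a i ^ 2 :=
        fun i => by ring
      calc ∑ i, (u - (t * sg) • a) i ^ 2
          = ∑ i, (u i ^ 2 - 2 * (t * sg) * (a i * u i) + (t ^ 2 * (sg * sg)) * a i ^ 2) := by
            refine Finset.sum_congr rfl fun i _ => ?_
            simp only [Pi.sub_apply, Pi.smul_apply, smul_eq_mul]
            exact expand i
      _ = ∑ i, u i ^ 2 - 2 * (t * sg) * D + t ^ 2 * Q := by
            rw [Finset.sum_add_distrib, Finset.sum_sub_distrib, ← Finset.mul_sum,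
              ← Finset.mul_sum, ← hD, ← hQ, hs2]
            ring
    have hl1 : ∑ i, |xt i| = ∑ i, |xstar i| - t := by
      have hxtj : xt j = sg * (m - t) := by
        have h1 : xt j = xstar j - t * sg := by rw [hxt]; simp
        rw [h1, hxj]; ring
      have habsj : |xt j| = m - t := by
        rw [hxtj, abs_mul, hsabs, one_mul, abs_of_nonneg (by linarith)]
      have hne : ∀ i, i ≠ j → xt i = xstar i := by
        intro i hij; rw [hxt]; simp [Pi.single_eq_of_ne hij]
      rw [← Finset.add_sum_erase _ (fun i => |xt i|) (Finset.mem_univ j),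
        ← Finset.add_sum_erase _ (fun i => |xstar i|) (Finset.mem_univ j)]
      have hrest : ∑ i ∈ Finset.univ.erase j, |xt i| = ∑ i ∈ Finset.univ.erase j, |xstar i| :=
        Finset.sum_congr rfl fun i hi => by rw [hne i (Finset.mem_erase.mp hi).1]
      rw [habsj, hrest, ← hm]
      ring
    have hP := hmin xt
    rw [lassoPrimal, lassoPrimal, sq_lpNorm2, sq_lpNorm2, lpNorm_one, lpNorm_one] at hP
    rw [hquad, hl1] at hP
    nlinarith [hP, ht]
  have hfin : lam ≤ -sg * D := by
    by_contra hc
    push_neg at hc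
    have hδ : 0 < lam + sg * D := by linarith
    set t0 : ℝ := min m ((lam + sg * D) / (Q + 1)) with ht0
    have ht0pos : 0 < t0 := lt_min hm0 (div_pos hδ (by linarith))
    have ht0m : t0 ≤ m := min_le_left _ _
    have h1 := key t0 ht0pos ht0m
    have h2 : t0 * (Q + 1) ≤ lam + sg * D := by
      have hle := min_le_right m ((lam + sg * D) / (Q + 1))
      calc t0 * (Q + 1) ≤ ((lam + sg * D) / (Q + 1)) * (Q + 1) :=
            mul_le_mul_of_nonneg_right hle (by linarith)
      _ = lam + sg * D := by field_simp
    nlinarith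
  have hDdot : (fun i => A i j) ⬝ᵥ (y - A *ᵥ xstar) = -D := by
    have hz : D + (fun i => A i j) ⬝ᵥ (y - A *ᵥ xstar) = 0 := by
      rw [hD, dotProduct, ← Finset.sum_add_distrib]
      refine Finset.sum_eq_zero fun i _ => ?_
      simp only [hu, ha, Pi.sub_apply]
      ring
    linarith
  rw [hDdot, abs_neg]
  calc lam ≤ -sg * D := hfin
  _ = -(sg * D) := by ring
  _ ≤ |sg * D| := neg_le_abs _
  _ = |sg| * |D| := abs_mul _ _
  _ = |D| := by rw [hsabs, one_mul]

end Aux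

theorem stable_screening_ball_zone (N K : ℕ) (hN : 0 < N)
    (A : Matrix (Fin N) (Fin K) ℝ) (y : Fin N → ℝ) (lam : ℝ) (hlam : 0 < lam)
    (xstar : Fin K → ℝ)
    (hmin : ∀ x : Fin K → ℝ, lassoPrimal A y lam xstar ≤ lassoPrimal A y lam x)
    (p pstar q qstar : ℝ≥0∞) (hp : 1 ≤ p) (hq : 1 ≤ q)
    (hpconj : 1 / p + 1 / pstar = 1) (hqconj : 1 / q + 1 / qstar = 1)
    (c : Fin N → ℝ) (R : ℝ) (hR : 0 ≤ R)
    (hsafe : lpNorm p (lam⁻¹ • (y - A *ᵥ xstar) - c) ≤ R)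
    (j : Fin K) (atil : Fin N → ℝ) (ε : ℝ)
    (herr : lpNorm q (atil - fun i => A i j) ≤ ε)
    (htest : |atil ⬝ᵥ c| + ε * lpNorm qstar c + R * lpNorm pstar atil
      + (N : ℝ) ^ max (1 - (1 / p).toReal - (1 / q).toReal) 0 * R * ε < 1) :
    xstar j = 0 := by
  by_contra hj
  -- notation
  set a : Fin N → ℝ := fun i => A i j with ha
  set θ : Fin N → ℝ := lam⁻¹ • (y - A *ᵥ xstar) with hθ
  set d : Fin N → ℝ := θ - c with hd
  set e : Fin N → ℝ := a - atil with he
  have hpstar : 1 ≤ pstar := conj_one_le hpconj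
  have hqstar : 1 ≤ qstar := conj_one_le hqconj
  -- lower bound 1 ≤ |a ⬝ᵥ θ|
  have hlow : 1 ≤ |a ⬝ᵥ θ| := by
    have h1 := kkt A y lam hlam xstar hmin j hj
    have h2 : a ⬝ᵥ θ = lam⁻¹ * (a ⬝ᵥ (y - A *ᵥ xstar)) := by
      rw [hθ, dotProduct_smul]; rfl
    rw [h2, abs_mul, abs_of_pos (inv_pos.mpr hlam)]
    calc (1:ℝ) = lam⁻¹ * lam := by field_simp
    _ ≤ lam⁻¹ * |a ⬝ᵥ (y - A *ᵥ xstar)| := by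
        exact mul_le_mul_of_nonneg_left h1 (le_of_lt (inv_pos.mpr hlam))
  -- error bounds
  have hεnn : 0 ≤ ε := le_trans (lpNorm_nonneg _ _) herr
  have herr' : lpNorm q e ≤ ε := by
    rw [lpNorm_congr_abs q (v := atil - fun i => A i j) (fun i => by
      simp [he, abs_sub_comm]; rfl)]
    exact herr
  -- decomposition
  have hdec : a ⬝ᵥ θ = atil ⬝ᵥ c + atil ⬝ᵥ d + e ⬝ᵥ c + e ⬝ᵥ d := by
    have e1 : a = atil + e := by simp [he]
    have e2 : θ = c + d := by simp [hd]
    rw [e1, e2, add_dotProduct, dotProduct_add, dotProduct_add]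
    ring
  -- Hölder bounds
  have hd_le : lpNorm p d ≤ R := hsafe
  have h1 : |atil ⬝ᵥ d| ≤ R * lpNorm pstar atil := by
    have := abs_dotProduct_le hN hpstar (conj_symm hpconj) atil d
    calc |atil ⬝ᵥ d| ≤ lpNorm pstar atil * lpNorm p d := this
    _ ≤ lpNorm pstar atil * R := by
        exact mul_le_mul_of_nonneg_left hd_le (lpNorm_nonneg _ _)
    _ = R * lpNorm pstar atil := mul_comm _ _
  have h2 : |e ⬝ᵥ c| ≤ ε * lpNorm qstar c := by
    calc |e ⬝ᵥ c| ≤ lpNorm q e * lpNorm qstar c := abs_dotProduct_le hN hq hqconj e c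
    _ ≤ ε * lpNorm qstar c := by
        exact mul_le_mul_of_nonneg_right herr' (lpNorm_nonneg _ _)
  have hCnn : (0:ℝ) ≤ (N : ℝ) ^ max (1 - (1 / p).toReal - (1 / q).toReal) 0 :=
    Real.rpow_nonneg (Nat.cast_nonneg _) _
  have hexp : max ((1/qstar).toReal - (1/p).toReal) 0
      = max (1 - (1 / p).toReal - (1 / q).toReal) 0 := by
    have hfin1 : (1/q : ℝ≥0∞) ≠ ∞ := by
      rw [one_div]
      simp [ENNReal.inv_ne_top]
      exact fun h => by simp [h] at hq
    have hfin2 : (1/qstar : ℝ≥0∞) ≠ ∞ := by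
      rw [one_div]
      simp [ENNReal.inv_ne_top]
      exact fun h => by simp [h] at hqstar
    have := congrArg ENNReal.toReal hqconj
    rw [ENNReal.toReal_add hfin1 hfin2] at this
    simp only [ENNReal.toReal_one] at this
    have : (1/qstar : ℝ≥0∞).toReal = 1 - (1/q : ℝ≥0∞).toReal := by linarith
    rw [this]
    ring_nf
  have h3 : |e ⬝ᵥ d| ≤ (N : ℝ) ^ max (1 - (1 / p).toReal - (1 / q).toReal) 0 * R * ε := by
    calc |e ⬝ᵥ d| ≤ lpNorm q e * lpNorm qstar d := abs_dotProduct_le hN hq hqconj e d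
    _ ≤ ε * lpNorm qstar d := mul_le_mul_of_nonneg_right herr' (lpNorm_nonneg _ _)
    _ ≤ ε * ((N : ℝ) ^ max ((1/qstar).toReal - (1/p).toReal) 0 * lpNorm p d) := by
        exact mul_le_mul_of_nonneg_left (lpNorm_le_factor_mul_lpNorm hN hqstar hp d) hεnn
    _ = ε * ((N : ℝ) ^ max (1 - (1 / p).toReal - (1 / q).toReal) 0 * lpNorm p d) := by
        rw [hexp]
    _ ≤ ε * ((N : ℝ) ^ max (1 - (1 / p).toReal - (1 / q).toReal) 0 * R) := by
        refine mul_le_mul_of_nonneg_left ?_ hεnn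
        exact mul_le_mul_of_nonneg_left hd_le hCnn
    _ = (N : ℝ) ^ max (1 - (1 / p).toReal - (1 / q).toReal) 0 * R * ε := by ring
  have habs : |a ⬝ᵥ θ| ≤ |atil ⬝ᵥ c| + |atil ⬝ᵥ d| + |e ⬝ᵥ c| + |e ⬝ᵥ d| := by
    rw [hdec]
    calc |atil ⬝ᵥ c + atil ⬝ᵥ d + e ⬝ᵥ c + e ⬝ᵥ d|
        ≤ |atil ⬝ᵥ c + atil ⬝ᵥ d + e ⬝ᵥ c| + |e ⬝ᵥ d| := abs_add_le _ _
    _ ≤ |atil ⬝ᵥ c + atil ⬝ᵥ d| + |e ⬝ᵥ c| + |e ⬝ᵥ d| := by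
        have := abs_add_le (atil ⬝ᵥ c + atil ⬝ᵥ d) (e ⬝ᵥ c); linarith
    _ ≤ |atil ⬝ᵥ c| + |atil ⬝ᵥ d| + |e ⬝ᵥ c| + |e ⬝ᵥ d| := by
        have := abs_add_le (atil ⬝ᵥ c) (atil ⬝ᵥ d); linarith
  linarith
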